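/- For α > 0 and n ≥ 0, the normalized Jacobi polynomial P̃_n^{(α,α)} (normalized so that ∫_{-1}^1 P̃_n^{(α,α)}(x)² (1-x²)^α dx = 1) satisfies α ∫_{-1}^1 P̃_n^{(α,α)}(x)² (1-x²)^{α-1} dx = n + α + 1/2. -/

import Mathlib

set_option maxHeartbeats 1000000


open Real MeasureTheory

/-- The Jacobi polynomial `P_n^{(α,α)}`, defined through the three-term recurrence
`P_{k+1}(x) = A_k x P_k(x) - C_k P_{k-1}(x)` (the middle coefficient `B_k` vanishes
when `β = α`). -/
noncomputable def jacobiP (α : ℝ) : ℕ → ℝ → ℝ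
  | 0, _ => 1
  | 1, x => (α + 1) * x
  | (n + 2), x =>
      ((2 * ((n : ℝ) + 1) + 2 * α + 1) * (2 * ((n : ℝ) + 1) + 2 * α + 2) /
          (2 * ((n : ℝ) + 2) * (((n : ℝ) + 1) + 2 * α + 1)) * x) * jacobiP α (n + 1) x -
        (((n : ℝ) + 1 + α) ^ 2 * (2 * ((n : ℝ) + 1) + 2 * α + 2) /
          (((n : ℝ) + 2) * (((n : ℝ) + 1) + 2 * α + 1) * (2 * ((n : ℝ) + 1) + 2 * α))) *
          jacobiP α n x


lemma jacobiP_zero (α : ℝ) (x : ℝ) : jacobiP α 0 x = 1 := rfl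
lemma jacobiP_one (α : ℝ) (x : ℝ) : jacobiP α 1 x = (α + 1) * x := rfl
lemma jacobiP_rec (α : ℝ) (n : ℕ) (x : ℝ) : jacobiP α (n+2) x =
      ((2 * ((n : ℝ) + 1) + 2 * α + 1) * (2 * ((n : ℝ) + 1) + 2 * α + 2) /
          (2 * ((n : ℝ) + 2) * (((n : ℝ) + 1) + 2 * α + 1)) * x) * jacobiP α (n + 1) x -
        (((n : ℝ) + 1 + α) ^ 2 * (2 * ((n : ℝ) + 1) + 2 * α + 2) /
          (((n : ℝ) + 2) * (((n : ℝ) + 1) + 2 * α + 1) * (2 * ((n : ℝ) + 1) + 2 * α))) *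
          jacobiP α n x := rfl

/-- simplified recurrence -/
lemma jacobiP_rec' (α : ℝ) (hα : 0 < α) (n : ℕ) (x : ℝ) : jacobiP α (n+2) x =
    ((2*(n:ℝ)+2*α+3)*((n:ℝ)+α+2)/(((n:ℝ)+2)*((n:ℝ)+2*α+2))) * (x * jacobiP α (n+1) x)
    - (((n:ℝ)+α+1)*((n:ℝ)+α+2)/(((n:ℝ)+2)*((n:ℝ)+2*α+2))) * jacobiP α n x := by
  rw [jacobiP_rec]
  have h1 : ((n:ℝ)+2) ≠ 0 := by positivity
  have h2 : ((n:ℝ)+2*α+2) ≠ 0 := by positivity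
  have h3 : ((n:ℝ)+1+2*α+1) ≠ 0 := by positivity
  have h4 : (2*((n:ℝ)+1)+2*α) ≠ 0 := by positivity
  field_simp
  ring

lemma jacobiP_two (α : ℝ) (hα : 0 < α) (x : ℝ) :
    jacobiP α 2 x = (α+2)/4*((2*α+3)*x^2 - 1) := by
  have h := jacobiP_rec α 0 x
  norm_num [jacobiP_one, jacobiP_zero] at h
  rw [h]
  have h1 : (0:ℝ) < α + 1 := by linarith
  field_simp
  ring

lemma jacobiP_three (α : ℝ) (hα : 0 < α) (x : ℝ) :
    jacobiP α 3 x = (α+2)*(α+3)/12*((2*α+5)*x^3 - 3*x) := by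
  have h := jacobiP_rec α 1 x
  norm_num [jacobiP_one, jacobiP_two α hα] at h
  rw [h]
  have h1 : (0:ℝ) < α + 1 := by linarith
  have h2 : (0:ℝ) < α + 2 := by linarith
  have h3 : (0:ℝ) < 2*α + 2 := by linarith
  field_simp
  ring

/-- abstract connection step -/
lemma step_conn {A C A₁ C₁ A₀ C₀ a₂ b₂ a₁ b₁ a₀ b₀ x p4 p3 p2 q4 q3 q2 q1 q0 : ℝ}
    (hA₀ : A₀ ≠ 0)
    (hP : p4 = A*(x*p3) - C*p2) (hI1 : p3 = a₁*q3 - b₁*q1) (hI0 : p2 = a₀*q2 - b₀*q0)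
    (hQ4 : q4 = A₁*(x*q3) - C₁*q2) (hQ2 : q2 = A₀*(x*q1) - C₀*q0)
    (S1 : A*a₁ = a₂*A₁) (S2 : A*b₁/A₀ = b₂ + a₂*C₁ - C*a₀) (S3 : A*b₁*C₀/A₀ = C*b₀) :
    p4 = a₂*q4 - b₂*q2 := by
  have hxq1 : x*q1 = (q2 + C₀*q0)/A₀ := by
    rw [eq_div_iff hA₀]; linear_combination -hQ2
  linear_combination hP + (A*x)*hI1 - C*hI0 - a₂*hQ4 - (A*b₁)*hxq1 + (x*q3)*S1 - q2*S2 - q0*S3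

/-- abstract derivative-value step -/
lemma step_der {A C A₀ C₀ c₂ c₁ c₀ a₀ b₀ x p2 q2 q1 q0 : ℝ} (hA₀ : A₀ ≠ 0)
    (hI0 : p2 = a₀*q2 - b₀*q0) (hQ2 : q2 = A₀*(x*q1) - C₀*q0)
    (S1 : A*a₀ + A*c₁/A₀ = c₂) (S2 : A*c₁*C₀/A₀ = A*b₀ + C*c₀) :
    c₂*q2 = A*(1*p2 + x*(c₁*q1)) - C*(c₀*q0) := by
  have hxq1 : x*q1 = (q2 + C₀*q0)/A₀ := by
    rw [eq_div_iff hA₀]; linear_combination -hQ2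
  linear_combination -A*hI0 - (A*c₁)*hxq1 - q2*S1 - q0*S2

/-- abstract multiplication step -/
lemma step_mul {A C A₁ C₁ A₂ C₂ g₂ d₂ g₁ d₁ g₀ d₀ s x p4 p3 p2 p1 p0 q2 q1 q0 : ℝ}
    (hA₂ : A₂ ≠ 0)
    (hQ2 : q2 = A₁*(x*q1) - C₁*q0) (hI1 : s*q1 = g₁*p3 + d₁*p1) (hI0 : s*q0 = g₀*p2 + d₀*p0)
    (hP4 : p4 = A*(x*p3) - C*p2) (hP2 : p2 = A₂*(x*p1) - C₂*p0)
    (S1 : A₁*g₁ = g₂*A) (S2 : A₁*d₁/A₂ = -(g₂*C) + d₂ + C₁*g₀) (S3 : A₁*d₁*C₂/A₂ = C₁*d₀) :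
    s*q2 = g₂*p4 + d₂*p2 := by
  have hxp1 : x*p1 = (p2 + C₂*p0)/A₂ := by
    rw [eq_div_iff hA₂]; linear_combination -hP2
  linear_combination s*hQ2 + (A₁*x)*hI1 - C₁*hI0 - g₂*hP4 + (A₁*d₁)*hxp1 + (x*p3)*S1 + p2*S2 + p0*S3

/-- abstract ode assembly -/
lemma step_ode {K L E A₀ C₀ g d a₀ b₀ x r p2 q2 q1 q0 s : ℝ} (hA₀ : A₀ ≠ 0)
    (hM : s*r = g*q2 + d*q0) (hC : p2 = a₀*q2 - b₀*q0) (hQ2 : q2 = A₀*(x*q1) - C₀*q0)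
    (S1 : K*g + L*a₀ = E/A₀) (S2 : K*d = E*C₀/A₀ + L*b₀) :
    K*(s*r) = E*(x*q1) - L*p2 := by
  have hxq1 : x*q1 = (q2 + C₀*q0)/A₀ := by
    rw [eq_div_iff hA₀]; linear_combination -hQ2
  linear_combination K*hM + L*hC - E*hxq1 + q2*S1 + q0*S2
/-- connection property -/
def ConnP (α : ℝ) (n : ℕ) : Prop := ∀ x : ℝ,
    jacobiP α (n+2) x =
      (((n:ℝ)+2*α+3)*((n:ℝ)+2*α+4)/((2*(n:ℝ)+2*α+5)*(2*(n:ℝ)+2*α+6))) * jacobiP (α+1) (n+2) x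
      - (((n:ℝ)+2+α)/(2*(2*(n:ℝ)+2*α+5))) * jacobiP (α+1) n x

lemma jacobiP_conn (α : ℝ) (hα : 0 < α) : ∀ n : ℕ, ConnP α n := by
  have hα1 : (0:ℝ) < α + 1 := by linarith
  have key : ∀ n : ℕ, ConnP α n ∧ ConnP α (n+1) := by
    intro n
    induction n with
    | zero =>
      constructor
      · unfold ConnP
        intro x
        rw [show (0:ℕ)+2 = 2 from rfl, jacobiP_two α hα, jacobiP_two (α+1) hα1, jacobiP_zero]
        push_cast
        have h2 : (2*α+5:ℝ) ≠ 0 := by positivity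
        have h3 : (2*α+6:ℝ) ≠ 0 := by positivity
        field_simp
        ring
      · unfold ConnP
        intro x
        rw [show (0:ℕ)+1+2 = 3 from rfl, jacobiP_three α hα, jacobiP_three (α+1) hα1,
          jacobiP_one]
        push_cast
        have h2 : (2*α+7:ℝ) ≠ 0 := by positivity
        have h3 : (2*α+8:ℝ) ≠ 0 := by positivity
        field_simp
        ring
    | succ k ih =>
      refine ⟨ih.2, ?_⟩
      unfold ConnP at ih ⊢
      intro x
      rw [show k+1+1 = k+2 from rfl]
      have hP := jacobiP_rec' α hα (k+2) x
      rw [show k+2+1 = k+1+2 from rfl] at hP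
      have hQ4 := jacobiP_rec' (α+1) hα1 (k+2) x
      rw [show k+2+1 = k+1+2 from rfl] at hQ4
      have hQ2 := jacobiP_rec' (α+1) hα1 k x
      refine step_conn ?_ hP (ih.2 x) (ih.1 x) hQ4 hQ2 ?_ ?_ ?_
      · positivity
      · push_cast
        have h1 : ((k:ℝ)+4) ≠ 0 := by positivity
        have h2 : ((k:ℝ)+2*α+4) ≠ 0 := by positivity
        have h3 : (2*(k:ℝ)+2*α+7) ≠ 0 := by positivity
        have h4 : (2*(k:ℝ)+2*α+8) ≠ 0 := by positivity
        have h5 : (2*(k:ℝ)+2*α+9) ≠ 0 := by positivity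
        have h6 : (2*(k:ℝ)+2*α+10) ≠ 0 := by positivity
        have h7 : ((k:ℝ)+2*α+6) ≠ 0 := by positivity
        field_simp
        ring
      · push_cast
        have h0 : ((k:ℝ)+2) ≠ 0 := by positivity
        have h1 : ((k:ℝ)+4) ≠ 0 := by positivity
        have h2 : ((k:ℝ)+2*α+4) ≠ 0 := by positivity
        have h3 : (2*(k:ℝ)+2*α+7) ≠ 0 := by positivity
        have h5 : (2*(k:ℝ)+2*α+9) ≠ 0 := by positivity
        have h6 : (2*(k:ℝ)+2*α+10) ≠ 0 := by positivity
        have h7 : ((k:ℝ)+2*α+6) ≠ 0 := by positivity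
        have h8 : ((k:ℝ)+α+3) ≠ 0 := by positivity
        have h9 : (2*(k:ℝ)+2*α+5) ≠ 0 := by positivity
        have h10 : (2*(k:ℝ)+2*α+6) ≠ 0 := by positivity
        field_simp
        ring
      · push_cast
        have h0 : ((k:ℝ)+2) ≠ 0 := by positivity
        have h1 : ((k:ℝ)+4) ≠ 0 := by positivity
        have h2 : ((k:ℝ)+2*α+4) ≠ 0 := by positivity
        have h3 : (2*(k:ℝ)+2*α+7) ≠ 0 := by positivity
        have h8 : ((k:ℝ)+α+3) ≠ 0 := by positivity
        have h9 : (2*(k:ℝ)+2*α+5) ≠ 0 := by positivity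
        field_simp
        ring
  intro n
  exact (key n).1

/-- multiplication by (1-x²) property -/
def MulP (α : ℝ) (n : ℕ) : Prop := ∀ x : ℝ,
    (1-x^2) * jacobiP (α+1) n x =
      (-4*((n:ℝ)+1)*((n:ℝ)+2)/((2*(n:ℝ)+2*α+3)*(2*(n:ℝ)+2*α+4))) * jacobiP α (n+2) x
      + (2*((n:ℝ)+α+1)/(2*(n:ℝ)+2*α+3)) * jacobiP α n x

lemma jacobiP_mul (α : ℝ) (hα : 0 < α) : ∀ n : ℕ, MulP α n := by
  have hα1 : (0:ℝ) < α + 1 := by linarith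
  have key : ∀ n : ℕ, MulP α n ∧ MulP α (n+1) := by
    intro n
    induction n with
    | zero =>
      constructor
      · unfold MulP
        intro x
        rw [show (0:ℕ)+2 = 2 from rfl, jacobiP_two α hα, jacobiP_zero, jacobiP_zero]
        push_cast
        have h2 : (2*α+3:ℝ) ≠ 0 := by positivity
        have h3 : (2*α+4:ℝ) ≠ 0 := by positivity
        field_simp
        ring
      · unfold MulP
        intro x
        rw [show (0:ℕ)+1+2 = 3 from rfl, jacobiP_three α hα, jacobiP_one, jacobiP_one]
        push_cast
        have h2 : (2*α+5:ℝ) ≠ 0 := by positivity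
        have h3 : (2*α+6:ℝ) ≠ 0 := by positivity
        field_simp
        ring
    | succ k ih =>
      refine ⟨ih.2, ?_⟩
      unfold MulP at ih ⊢
      intro x
      rw [show k+1+1 = k+2 from rfl]
      have hP4 := jacobiP_rec' α hα (k+2) x
      rw [show k+2+1 = k+1+2 from rfl] at hP4
      have hP2 := jacobiP_rec' α hα k x
      have hQ2 := jacobiP_rec' (α+1) hα1 k x
      refine step_mul ?_ hQ2 (ih.2 x) (ih.1 x) hP4 hP2 ?_ ?_ ?_
      · positivity
      · push_cast
        have h0 : ((k:ℝ)+2) ≠ 0 := by positivity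
        have h1 : ((k:ℝ)+4) ≠ 0 := by positivity
        have h2 : ((k:ℝ)+2*α+4) ≠ 0 := by positivity
        have h3 : (2*(k:ℝ)+2*α+5) ≠ 0 := by positivity
        have h4 : (2*(k:ℝ)+2*α+6) ≠ 0 := by positivity
        have h5 : (2*(k:ℝ)+2*α+7) ≠ 0 := by positivity
        have h6 : (2*(k:ℝ)+2*α+8) ≠ 0 := by positivity
        field_simp
        ring
      · push_cast
        have h0 : ((k:ℝ)+2) ≠ 0 := by positivity
        have h1 : ((k:ℝ)+4) ≠ 0 := by positivity
        have h2 : ((k:ℝ)+2*α+2) ≠ 0 := by positivity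
        have h2' : ((k:ℝ)+2*α+4) ≠ 0 := by positivity
        have h3 : (2*(k:ℝ)+2*α+3) ≠ 0 := by positivity
        have h4 : (2*(k:ℝ)+2*α+4) ≠ 0 := by positivity
        have h5 : (2*(k:ℝ)+2*α+5) ≠ 0 := by positivity
        have h6 : (2*(k:ℝ)+2*α+6) ≠ 0 := by positivity
        have h7 : (2*(k:ℝ)+2*α+7) ≠ 0 := by positivity
        have h8 : (2*(k:ℝ)+2*α+8) ≠ 0 := by positivity
        have h9 : ((k:ℝ)+α+2) ≠ 0 := by positivity
        field_simp
        ring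
      · push_cast
        have h0 : ((k:ℝ)+2) ≠ 0 := by positivity
        have h2 : ((k:ℝ)+2*α+2) ≠ 0 := by positivity
        have h2' : ((k:ℝ)+2*α+4) ≠ 0 := by positivity
        have h3 : (2*(k:ℝ)+2*α+3) ≠ 0 := by positivity
        have h4 : (2*(k:ℝ)+2*α+4) ≠ 0 := by positivity
        have h5 : (2*(k:ℝ)+2*α+5) ≠ 0 := by positivity
        have h9 : ((k:ℝ)+α+2) ≠ 0 := by positivity
        field_simp
        ring
  intro n
  exact (key n).1

/-- derivative property -/
def DerP (α : ℝ) (n : ℕ) : Prop := ∀ x : ℝ,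
    HasDerivAt (jacobiP α (n+1)) ((((n:ℝ)+2*α+2)/2) * jacobiP (α+1) n x) x

lemma jacobiP_der (α : ℝ) (hα : 0 < α) : ∀ n : ℕ, DerP α n := by
  have hα1 : (0:ℝ) < α + 1 := by linarith
  have key : ∀ n : ℕ, DerP α n ∧ DerP α (n+1) := by
    intro n
    induction n with
    | zero =>
      constructor
      · unfold DerP
        intro x
        rw [show (0:ℕ)+1 = 1 from rfl]
        have hf : jacobiP α 1 = fun y => (α+1)*y := funext fun y => jacobiP_one α y
        rw [hf]
        have h : HasDerivAt (fun y : ℝ => (α+1)*y) ((α+1)*1) x := (hasDerivAt_id x).const_mul (α+1)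
        convert h using 1
        rw [jacobiP_zero]
        push_cast
        ring
      · unfold DerP
        intro x
        rw [show (0:ℕ)+1+1 = 2 from rfl]
        have hf : jacobiP α 2 = fun y => (α+2)/4*((2*α+3)*y^2 - 1) :=
          funext fun y => jacobiP_two α hα y
        rw [hf]
        have h : HasDerivAt (fun y : ℝ => (α+2)/4*((2*α+3)*y^2 - 1))
            ((α+2)/4*((2*α+3)*(2*x^1))) x :=
          ((((hasDerivAt_pow 2 x).const_mul (2*α+3)).sub_const 1).const_mul ((α+2)/4))
        convert h using 1
        rw [jacobiP_one]
        push_cast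
        ring
    | succ k ih =>
      refine ⟨ih.2, ?_⟩
      unfold DerP at ih ⊢
      intro x
      rw [show k+1+1 = k+2 from rfl, show k+2+1 = k+1+2 from rfl]
      have hf : jacobiP α (k+1+2) = fun y =>
          ((2*((k:ℝ)+1)+2*α+3)*(((k:ℝ)+1)+α+2)/((((k:ℝ)+1)+2)*(((k:ℝ)+1)+2*α+2))) * (y * jacobiP α (k+1+1) y)
          - ((((k:ℝ)+1)+α+1)*(((k:ℝ)+1)+α+2)/((((k:ℝ)+1)+2)*(((k:ℝ)+1)+2*α+2))) * jacobiP α (k+1) y := by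
        funext y
        have h := jacobiP_rec' α hα (k+1) y
        push_cast at h ⊢
        exact h
      rw [hf]
      have H := (((hasDerivAt_id x).mul (ih.2 x)).const_mul
          ((2*((k:ℝ)+1)+2*α+3)*(((k:ℝ)+1)+α+2)/((((k:ℝ)+1)+2)*(((k:ℝ)+1)+2*α+2)))).sub
          ((ih.1 x).const_mul ((((k:ℝ)+1)+α+1)*(((k:ℝ)+1)+α+2)/((((k:ℝ)+1)+2)*(((k:ℝ)+1)+2*α+2))))
      convert H using 1
      · rfl
      · rfl
      · rfl
      rw [show k+1+1 = k+2 from rfl]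
      have hconn := jacobiP_conn α hα k x
      have hQ2 := jacobiP_rec' (α+1) hα1 k x
      refine step_der ?_ hconn hQ2 ?_ ?_
      · positivity
      · push_cast
        have h0 : ((k:ℝ)+2) ≠ 0 := by positivity
        have h1 : ((k:ℝ)+3) ≠ 0 := by positivity
        have h2 : ((k:ℝ)+2*α+2) ≠ 0 := by positivity
        have h2' : ((k:ℝ)+2*α+4) ≠ 0 := by positivity
        have h3 : (2*(k:ℝ)+2*α+5) ≠ 0 := by positivity
        have h4 : (2*(k:ℝ)+2*α+6) ≠ 0 := by positivity
        have h9 : ((k:ℝ)+α+3) ≠ 0 := by positivity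
        field_simp
        ring
      · push_cast
        have h0 : ((k:ℝ)+2) ≠ 0 := by positivity
        have h1 : ((k:ℝ)+3) ≠ 0 := by positivity
        have h2 : ((k:ℝ)+2*α+2) ≠ 0 := by positivity
        have h2' : ((k:ℝ)+2*α+4) ≠ 0 := by positivity
        have h3 : (2*(k:ℝ)+2*α+5) ≠ 0 := by positivity
        have h9 : ((k:ℝ)+α+3) ≠ 0 := by positivity
        field_simp
        ring
  intro n
  exact (key n).1

/-- the differential equation, assembled form -/
lemma jacobiP_ode (α : ℝ) (hα : 0 < α) (n : ℕ) (x : ℝ) :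
    ((n:ℝ)+2*α+4) * ((1-x^2) * jacobiP (α+2) n x) =
      (4*(α+1)) * (x * jacobiP (α+1) (n+1) x) - (4*((n:ℝ)+2)) * jacobiP α (n+2) x := by
  have hα1 : (0:ℝ) < α + 1 := by linarith
  have hM := jacobiP_mul (α+1) hα1 n x
  rw [show α+1+1 = α+2 by ring] at hM
  have hC := jacobiP_conn α hα n x
  have hQ2 := jacobiP_rec' (α+1) hα1 n x
  refine step_ode ?_ hM hC hQ2 ?_ ?_
  · positivity
  · have h0 : ((n:ℝ)+2) ≠ 0 := by positivity
    have h2 : ((n:ℝ)+2*α+4) ≠ 0 := by positivity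
    have h3 : (2*(n:ℝ)+2*α+5) ≠ 0 := by positivity
    have h4 : (2*(n:ℝ)+2*α+6) ≠ 0 := by positivity
    have h9 : ((n:ℝ)+α+3) ≠ 0 := by positivity
    field_simp
    ring
  · have h0 : ((n:ℝ)+2) ≠ 0 := by positivity
    have h2 : ((n:ℝ)+2*α+4) ≠ 0 := by positivity
    have h3 : (2*(n:ℝ)+2*α+5) ≠ 0 := by positivity
    have h4 : (2*(n:ℝ)+2*α+6) ≠ 0 := by positivity
    have h9 : ((n:ℝ)+α+3) ≠ 0 := by positivity
    field_simp
    ring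

/-! Analysis utilities -/

lemma jacobiP_continuous (α : ℝ) : ∀ n : ℕ, Continuous (jacobiP α n) := by
  have key : ∀ n : ℕ, Continuous (jacobiP α n) ∧ Continuous (jacobiP α (n+1)) := by
    intro n
    induction n with
    | zero =>
      constructor
      · rw [funext fun y => jacobiP_zero α y]; exact continuous_const
      · rw [show (0:ℕ)+1 = 1 from rfl, funext fun y => jacobiP_one α y]
        exact continuous_const.mul continuous_id
    | succ k ih =>
      refine ⟨ih.2, ?_⟩
      rw [show k+1+1 = k+2 from rfl, funext fun y => jacobiP_rec α k y]
      exact ((continuous_const.mul continuous_id).mul ih.2).sub (continuous_const.mul ih.1)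
  exact fun n => (key n).1

lemma continuous_w {p : ℝ} (hp : 0 < p) : Continuous (fun x : ℝ => (1-x^2)^p) := by
  rw [continuous_iff_continuousAt]
  intro x
  exact ContinuousAt.rpow_const (by fun_prop) (Or.inr hp.le)

lemma hasDerivAt_w (p : ℝ) {x : ℝ} (hx : (1:ℝ)-x^2 ≠ 0) :
    HasDerivAt (fun y : ℝ => (1-y^2)^p) (-(2*x) * p * (1-x^2)^(p-1)) x := by
  have h := ((hasDerivAt_pow 2 x).const_sub 1).rpow_const (p := p) (Or.inl hx)
  convert h using 1
  norm_num

lemma w_neg_one (p : ℝ) (hp : p ≠ 0) : ((1:ℝ)-(-1:ℝ)^2)^p = 0 := by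
  norm_num [Real.zero_rpow hp]

lemma w_one (p : ℝ) (hp : p ≠ 0) : ((1:ℝ)-(1:ℝ)^2)^p = 0 := by
  norm_num [Real.zero_rpow hp]

lemma ii_w {β : ℝ} (hβ : 0 < β) :
    IntervalIntegrable (fun x : ℝ => (1-x^2)^(β-1)) volume (-1) 1 := by
  have hr : (-1:ℝ) < β - 1 := by linarith
  have right : IntervalIntegrable (fun x : ℝ => (1-x^2)^(β-1)) volume 0 1 := by
    have h1 : IntervalIntegrable (fun x : ℝ => (1-x)^(β-1)) volume 0 1 := by
      have := (intervalIntegral.intervalIntegrable_rpow' (a := 0) (b := 1) hr).comp_sub_left 1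
      simpa using this.symm
    have hco : ContinuousOn (fun x : ℝ => (1+x)^(β-1)) (Set.uIcc 0 1) := by
      intro x hx
      rw [Set.uIcc_of_le (by norm_num)] at hx
      exact (ContinuousAt.rpow_const (by fun_prop)
        (Or.inl (by nlinarith [hx.1]))).continuousWithinAt
    have h2 := h1.mul_continuousOn hco
    apply h2.congr
    intro x hx
    beta_reduce
    rw [Set.uIoc_of_le (by norm_num : (0:ℝ) ≤ 1)] at hx
    rw [← Real.mul_rpow (by linarith [hx.2]) (by linarith [hx.1])]
    congr 1
    ring
  have left : IntervalIntegrable (fun x : ℝ => (1-x^2)^(β-1)) volume (-1) 0 := by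
    have h1 : IntervalIntegrable (fun x : ℝ => (x+1)^(β-1)) volume (-1) 0 := by
      have := (intervalIntegral.intervalIntegrable_rpow' (a := 0) (b := 1) hr).comp_sub_right (-1)
      simpa [sub_neg_eq_add] using this
    have hco : ContinuousOn (fun x : ℝ => (1-x)^(β-1)) (Set.uIcc (-1) 0) := by
      intro x hx
      rw [Set.uIcc_of_le (by norm_num)] at hx
      exact (ContinuousAt.rpow_const (by fun_prop)
        (Or.inl (by nlinarith [hx.2]))).continuousWithinAt
    have h2 := h1.mul_continuousOn hco
    apply h2.congr
    intro x hx
    beta_reduce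
    rw [Set.uIoc_of_le (by norm_num : (-1:ℝ) ≤ 0)] at hx
    rw [← Real.mul_rpow (by linarith [hx.1]) (by linarith [hx.2])]
    congr 1
    ring
  exact left.trans right

lemma ii_gw {β : ℝ} (hβ : 0 < β) {g : ℝ → ℝ} (hg : Continuous g) :
    IntervalIntegrable (fun x => g x * (1-x^2)^(β-1)) volume (-1) 1 :=
  (ii_w hβ).continuousOn_mul hg.continuousOn

lemma ftc0 {F f : ℝ → ℝ} (hF : ContinuousOn F (Set.Icc (-1) 1))
    (hd : ∀ x ∈ Set.Ioo (-1:ℝ) 1, HasDerivAt F (f x) x)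
    (hi : IntervalIntegrable f volume (-1) 1) (h1 : F 1 = 0) (h2 : F (-1) = 0) :
    ∫ x in (-1:ℝ)..1, f x = 0 := by
  rw [intervalIntegral.integral_eq_sub_of_hasDeriv_right_of_le (by norm_num) hF
    (fun x hx => (hd x hx).hasDerivWithinAt) hi, h1, h2, sub_zero]

lemma real_beta {u v : ℝ} (hu : 0 < u) (hv : 0 < v) :
    ∫ x in (0:ℝ)..1, x^(u-1) * (1-x)^(v-1) = Gamma u * Gamma v / Gamma (u+v) := by
  have key := Complex.Gamma_mul_Gamma_eq_betaIntegral (s := (u:ℂ)) (t := (v:ℂ))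
    (by simpa using hu) (by simpa using hv)
  have hbeta : Complex.betaIntegral u v = ((∫ x in (0:ℝ)..1, x^(u-1)*(1-x)^(v-1)) : ℝ) := by
    rw [Complex.betaIntegral, ← intervalIntegral.integral_ofReal]
    apply intervalIntegral.integral_congr
    intro x hx
    rw [Set.uIcc_of_le (by norm_num : (0:ℝ) ≤ 1)] at hx
    push_cast
    rw [Complex.ofReal_cpow hx.1, Complex.ofReal_cpow (by linarith [hx.2])]
    push_cast
    ring
  rw [hbeta, show ((u:ℂ)+(v:ℂ)) = ((u+v:ℝ):ℂ) by push_cast; ring, Complex.Gamma_ofReal,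
    Complex.Gamma_ofReal, Complex.Gamma_ofReal] at key
  have hne : Gamma (u+v) ≠ 0 := (Real.Gamma_pos_of_pos (by linarith)).ne'
  rw [eq_div_iff hne]
  have key2 : Gamma u * Gamma v = Gamma (u+v) * ∫ x in (0:ℝ)..1, x^(u-1)*(1-x)^(v-1) := by
    exact_mod_cast key
  linarith [key2]

lemma integral_w {β : ℝ} (hβ : 0 < β) :
    ∫ x in (-1:ℝ)..1, (1-x^2)^(β-1) = Real.sqrt π * Gamma β / Gamma (β+1/2) := by
  have hsub := intervalIntegral.integral_comp_mul_add
    (a := 0) (b := 1) (c := 2) (f := fun x : ℝ => (1-x^2)^(β-1)) two_ne_zero (-1)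
  norm_num at hsub
  have hcong : (∫ x in (0:ℝ)..1, (1-(2*x + -1)^2)^(β-1))
      = ∫ x in (0:ℝ)..1, (4:ℝ)^(β-1) * (x^(β-1) * (1-x)^(β-1)) := by
    apply intervalIntegral.integral_congr
    intro t ht
    rw [Set.uIcc_of_le (by norm_num : (0:ℝ) ≤ 1)] at ht
    show (1-(2*t + -1)^2)^(β-1) = (4:ℝ)^(β-1) * (t^(β-1) * (1-t)^(β-1))
    rw [show (1:ℝ)-(2*t + -1)^2 = 4*(t*(1-t)) by ring,
      Real.mul_rpow (by norm_num) (by nlinarith [ht.1, ht.2]),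
      Real.mul_rpow ht.1 (by linarith [ht.2])]
  have hbeta := real_beta hβ hβ
  have hΓβ : (0:ℝ) < Gamma β := Real.Gamma_pos_of_pos hβ
  have hΓ2β : (0:ℝ) < Gamma (2*β) := Real.Gamma_pos_of_pos (by linarith)
  have hΓh : (0:ℝ) < Gamma (β+1/2) := Real.Gamma_pos_of_pos (by linarith)
  have h4 : (4:ℝ)^(β-1) = 2^(2*β-2) := by
    rw [show (4:ℝ) = (2:ℝ)^(2:ℕ) by norm_num, ← Real.rpow_natCast 2 2,
      ← Real.rpow_mul (by norm_num : (0:ℝ) ≤ 2),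
      show ((2:ℕ):ℝ)*(β-1) = 2*β-2 by push_cast; ring]
  have hpow : (2:ℝ)^(2*β-2)*(2:ℝ)^(1-2*β) = 2⁻¹ := by
    rw [← Real.rpow_add two_pos, show (2*β-2)+(1-2*β) = -1 by ring, Real.rpow_neg_one]
  have hG := Real.Gamma_mul_Gamma_add_half β
  have goal2 : (∫ x in (-1:ℝ)..1, (1-x^2)^(β-1))
      = 2 * ((4:ℝ)^(β-1) * (Gamma β * Gamma β / Gamma (β+β))) := by
    rw [← hbeta, ← intervalIntegral.integral_const_mul, ← hcong]
    linarith [hsub]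
  rw [goal2, h4, show β+β = 2*β by ring,
    show (2:ℝ)*((2:ℝ)^(2*β-2)*(Gamma β*Gamma β/Gamma (2*β)))
      = (2*(2:ℝ)^(2*β-2)*Gamma β*Gamma β)/Gamma (2*β) by ring,
    div_eq_div_iff hΓ2β.ne' hΓh.ne']
  linear_combination (2*(2:ℝ)^(2*β-2)*Gamma β)*hG + (2*Real.sqrt π*Gamma β*Gamma (2*β))*hpow

lemma key_int (α : ℝ) (hα : 0 < α) (n : ℕ) :
    4*((n:ℝ)+2) * (α * ∫ x in (-1:ℝ)..1, (jacobiP α (n+1+1) x)^2 * (1-x^2)^(α-1))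
      = (α+1)*((n:ℝ)+2*α+3) * ∫ x in (-1:ℝ)..1, (jacobiP (α+1) (n+1) x)^2 * (1-x^2)^α := by
  have hα1 : (0:ℝ) < α+1 := by linarith
  have hucont : Continuous (jacobiP α (n+1+1)) := jacobiP_continuous α (n+1+1)
  have hvcont : Continuous (jacobiP (α+1) (n+1)) := jacobiP_continuous (α+1) (n+1)
  have hIint : IntervalIntegrable (fun x => (jacobiP α (n+1+1) x)^2 * (1-x^2)^(α-1))
      volume (-1) 1 := ii_gw hα (hucont.pow 2)
  have hHint : IntervalIntegrable (fun x => (jacobiP α (n+1+1) x)^2 * (1-x^2)^α)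
      volume (-1) 1 := ((hucont.pow 2).mul (continuous_w hα)).intervalIntegrable _ _
  have hJint : IntervalIntegrable
      (fun x => x*jacobiP α (n+1+1) x*jacobiP (α+1) (n+1) x*(1-x^2)^α) volume (-1) 1 :=
    (((continuous_id.mul hucont).mul hvcont).mul (continuous_w hα)).intervalIntegrable _ _
  have hEint : IntervalIntegrable (fun x => (jacobiP (α+1) (n+1) x)^2 * (1-x^2)^(α+1))
      volume (-1) 1 := ((hvcont.pow 2).mul (continuous_w hα1)).intervalIntegrable _ _
  have hFint : IntervalIntegrable (fun x => (jacobiP (α+1) (n+1) x)^2 * (1-x^2)^α)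
      volume (-1) 1 := ((hvcont.pow 2).mul (continuous_w hα)).intervalIntegrable _ _
  -- E1
  have E1 : (1+2*α) * (∫ x in (-1:ℝ)..1, (jacobiP α (n+1+1) x)^2*(1-x^2)^α)
      + ((n:ℝ)+2*α+3) * (∫ x in (-1:ℝ)..1, x*jacobiP α (n+1+1) x*jacobiP (α+1) (n+1) x*(1-x^2)^α)
      - 2*α * (∫ x in (-1:ℝ)..1, (jacobiP α (n+1+1) x)^2*(1-x^2)^(α-1)) = 0 := by
    have hftc : (∫ x in (-1:ℝ)..1,
        ((1+2*α)*((jacobiP α (n+1+1) x)^2*(1-x^2)^α)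
          + ((n:ℝ)+2*α+3)*(x*jacobiP α (n+1+1) x*jacobiP (α+1) (n+1) x*(1-x^2)^α)
          - 2*α*((jacobiP α (n+1+1) x)^2*(1-x^2)^(α-1)))) = 0 := by
      refine ftc0 (F := fun x => x*(jacobiP α (n+1+1) x)^2*(1-x^2)^α) ?_ ?_ ?_ ?_ ?_
      · exact ((continuous_id.mul (hucont.pow 2)).mul (continuous_w hα)).continuousOn
      · intro x hx
        have hs : (1:ℝ)-x^2 ≠ 0 := by nlinarith [hx.1, hx.2]
        have hder := ((hasDerivAt_id x).mul ((jacobiP_der α hα (n+1) x).pow 2)).mul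
          (hasDerivAt_w α hs)
        simp only [id_eq] at hder
        convert hder using 1
        · rfl
        · rfl
        · rfl
        simp only [Pi.mul_apply, Pi.pow_apply, id_eq]
        have hsa := Real.rpow_add_one hs (α-1)
        rw [sub_add_cancel] at hsa
        rw [hsa]
        push_cast
        ring
      · exact ((hHint.const_mul _).add (hJint.const_mul _)).sub (hIint.const_mul _)
      · norm_num [Real.zero_rpow hα.ne']
      · norm_num [Real.zero_rpow hα.ne']
    rw [intervalIntegral.integral_sub ((hHint.const_mul _).add (hJint.const_mul _))
        (hIint.const_mul _),
      intervalIntegral.integral_add (hHint.const_mul _) (hJint.const_mul _),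
      intervalIntegral.integral_const_mul, intervalIntegral.integral_const_mul,
      intervalIntegral.integral_const_mul] at hftc
    exact hftc
  -- E2
  have E2 : ((n:ℝ)+2*α+3)/2 * (∫ x in (-1:ℝ)..1, (jacobiP (α+1) (n+1) x)^2*(1-x^2)^(α+1))
      - 2*((n:ℝ)+2) * (∫ x in (-1:ℝ)..1, (jacobiP α (n+1+1) x)^2*(1-x^2)^α) = 0 := by
    have hftc : (∫ x in (-1:ℝ)..1,
        (((n:ℝ)+2*α+3)/2*((jacobiP (α+1) (n+1) x)^2*(1-x^2)^(α+1))
          - 2*((n:ℝ)+2)*((jacobiP α (n+1+1) x)^2*(1-x^2)^α))) = 0 := by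
      refine ftc0 (F := fun x => (1-x^2)^(α+1)*(jacobiP α (n+1+1) x*jacobiP (α+1) (n+1) x))
        ?_ ?_ ?_ ?_ ?_
      · exact ((continuous_w hα1).mul (hucont.mul hvcont)).continuousOn
      · intro x hx
        have hs : (1:ℝ)-x^2 ≠ 0 := by nlinarith [hx.1, hx.2]
        have hder := (hasDerivAt_w (α+1) hs).mul
          ((jacobiP_der α hα (n+1) x).mul (jacobiP_der (α+1) hα1 n x))
        rw [show α+1-1 = α by ring, show (α:ℝ)+1+1 = α+2 by ring] at hder
        convert hder using 1
        · rfl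
        · rfl
        · rfl
        simp only [Pi.mul_apply, Pi.pow_apply, id_eq]
        have hODE := jacobiP_ode α hα n x
        rw [show n+2 = n+1+1 from rfl] at hODE
        have hsb := Real.rpow_add_one hs α
        rw [hsb]
        push_cast at hODE ⊢
        linear_combination (-((1-x^2)^α * jacobiP α (n+1+1) x)/2) * hODE
      · exact (hEint.const_mul _).sub (hHint.const_mul _)
      · norm_num [Real.zero_rpow hα1.ne']
      · norm_num [Real.zero_rpow hα1.ne']
    rw [intervalIntegral.integral_sub (hEint.const_mul _) (hHint.const_mul _),
      intervalIntegral.integral_const_mul, intervalIntegral.integral_const_mul] at hftc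
    exact hftc
  -- E3
  have E3 : (-(2*α+1)) * (∫ x in (-1:ℝ)..1, (jacobiP (α+1) (n+1) x)^2*(1-x^2)^(α+1))
      + 2*(α+1) * (∫ x in (-1:ℝ)..1, (jacobiP (α+1) (n+1) x)^2*(1-x^2)^α)
      - 4*((n:ℝ)+2) * (∫ x in (-1:ℝ)..1, x*jacobiP α (n+1+1) x*jacobiP (α+1) (n+1) x*(1-x^2)^α)
      = 0 := by
    have hftc : (∫ x in (-1:ℝ)..1,
        ((-(2*α+1))*((jacobiP (α+1) (n+1) x)^2*(1-x^2)^(α+1))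
          + 2*(α+1)*((jacobiP (α+1) (n+1) x)^2*(1-x^2)^α)
          - 4*((n:ℝ)+2)*(x*jacobiP α (n+1+1) x*jacobiP (α+1) (n+1) x*(1-x^2)^α))) = 0 := by
      refine ftc0 (F := fun x => x*(1-x^2)^(α+1)*(jacobiP (α+1) (n+1) x)^2) ?_ ?_ ?_ ?_ ?_
      · exact ((continuous_id.mul (continuous_w hα1)).mul (hvcont.pow 2)).continuousOn
      · intro x hx
        have hs : (1:ℝ)-x^2 ≠ 0 := by nlinarith [hx.1, hx.2]
        have hder := ((hasDerivAt_id x).mul (hasDerivAt_w (α+1) hs)).mul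
          ((jacobiP_der (α+1) hα1 n x).pow 2)
        simp only [id_eq] at hder
        rw [show α+1-1 = α by ring, show (α:ℝ)+1+1 = α+2 by ring] at hder
        convert hder using 1
        · rfl
        · rfl
        · rfl
        simp only [Pi.mul_apply, Pi.pow_apply, id_eq]
        have hODE := jacobiP_ode α hα n x
        rw [show n+2 = n+1+1 from rfl] at hODE
        have hsb := Real.rpow_add_one hs α
        rw [hsb]
        push_cast at hODE ⊢
        linear_combination (-(x * jacobiP (α+1) (n+1) x * (1-x^2)^α)) * hODE
      · exact ((hEint.const_mul _).add (hFint.const_mul _)).sub (hJint.const_mul _)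
      · norm_num [Real.zero_rpow hα1.ne']
      · norm_num [Real.zero_rpow hα1.ne']
    rw [intervalIntegral.integral_sub ((hEint.const_mul _).add (hFint.const_mul _))
        (hJint.const_mul _),
      intervalIntegral.integral_add (hEint.const_mul _) (hFint.const_mul _),
      intervalIntegral.integral_const_mul, intervalIntegral.integral_const_mul,
      intervalIntegral.integral_const_mul] at hftc
    exact hftc
  linear_combination (-2*((n:ℝ)+2))*E1 + (-(1+2*α))*E2 + (-((n:ℝ)+2*α+3)/2)*E3

/-- The squared weighted `L²` norm `h_n^{(α,α)}` of the Jacobi polynomial `P_n^{(α,α)}`. -/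
noncomputable def jacobiH (α : ℝ) (n : ℕ) : ℝ :=
  (2 : ℝ) ^ (2 * α + 1) * Real.Gamma (n + α + 1) ^ 2 /
    (n.factorial * (2 * n + 2 * α + 1) * Real.Gamma (n + 2 * α + 1))


lemma two_rpow_two : (2:ℝ)^(2:ℝ) = 4 := by
  rw [show (2:ℝ) = ((2:ℕ):ℝ) by norm_num, Real.rpow_natCast]
  norm_num

lemma jacobiH_pos (α : ℝ) (hα : 0 < α) (n : ℕ) : 0 < jacobiH α n := by
  unfold jacobiH
  have h1 : (0:ℝ) < Gamma ((n:ℝ)+α+1) := Real.Gamma_pos_of_pos (by positivity)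
  have h2 : (0:ℝ) < Gamma ((n:ℝ)+2*α+1) := Real.Gamma_pos_of_pos (by positivity)
  have h3 : (0:ℝ) < (n.factorial : ℝ) := by exact_mod_cast n.factorial_pos
  positivity

lemma jacobiH_ratio (α : ℝ) (hα : 0 < α) (n : ℕ) :
    4*((n:ℝ)+2) * jacobiH α (n+2) = ((n:ℝ)+2*α+3) * jacobiH (α+1) (n+1) := by
  unfold jacobiH
  rw [show (((n+2:ℕ)):ℝ)+α+1 = (((n+1:ℕ)):ℝ)+(α+1)+1 by push_cast; ring,
    show (((n+1:ℕ)):ℝ)+2*(α+1)+1 = ((((n+2:ℕ)):ℝ)+2*α+1)+1 by push_cast; ring,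
    Real.Gamma_add_one (show ((((n+2:ℕ)):ℝ)+2*α+1) ≠ 0 by positivity),
    show (2:ℝ)*(α+1)+1 = (2*α+1)+2 by ring, Real.rpow_add two_pos (2*α+1) 2, two_rpow_two,
    show n+2 = (n+1)+1 from rfl, Nat.factorial_succ]
  have hΓ1 : (0:ℝ) < Gamma (((n+1:ℕ):ℝ)+(α+1)+1) := Real.Gamma_pos_of_pos (by positivity)
  have hΓ2 : (0:ℝ) < Gamma ((((n+1+1:ℕ)):ℝ)+2*α+1) := Real.Gamma_pos_of_pos (by positivity)
  have hf : (0:ℝ) < ((n+1).factorial : ℝ) := by exact_mod_cast (n+1).factorial_pos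
  push_cast
  have h1 : ((n:ℝ)+1+1) ≠ 0 := by positivity
  have h2 : (2*((n:ℝ)+1+1)+2*α+1) ≠ 0 := by positivity
  have h3 : (2*((n:ℝ)+1)+2*(α+1)+1) ≠ 0 := by positivity
  have h4 : ((n:ℝ)+1+1+2*α+1) ≠ 0 := by positivity
  field_simp
  ring

lemma base0_scalar (α : ℝ) (hα : 0 < α) :
    α * (Real.sqrt π * Gamma α / Gamma (α+1/2)) = (α+1/2) * jacobiH α 0 := by
  unfold jacobiH
  have e0 : Gamma (α+1) = α*Gamma α := Real.Gamma_add_one hα.ne'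
  have e1 : Gamma (2*α+1) = 2*α*Gamma (2*α) := Real.Gamma_add_one (by positivity)
  have hG := Real.Gamma_mul_Gamma_add_half α
  have hpow4 : (2:ℝ)^(2*α+1)*(2:ℝ)^(1-2*α) = 4 := by
    rw [← Real.rpow_add two_pos, show 2*α+1+(1-2*α) = (2:ℝ) by ring, two_rpow_two]
  have hΓα : (0:ℝ) < Gamma α := Real.Gamma_pos_of_pos hα
  have hΓh : (0:ℝ) < Gamma (α+1/2) := Real.Gamma_pos_of_pos (by positivity)
  have hΓ2 : (0:ℝ) < Gamma (2*α) := Real.Gamma_pos_of_pos (by positivity)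
  have hπ : (0:ℝ) < Real.sqrt π := Real.sqrt_pos.mpr Real.pi_pos
  push_cast
  norm_num
  have key : α * (Real.sqrt π * Gamma α) * ((2*α+1) * Gamma (2*α+1))
      = (α+1/2) * ((2:ℝ)^(2*α+1) * Gamma (α+1)^2) * Gamma (α+1/2) := by
    rw [e0, e1]
    linear_combination (-(α+1/2)*(2:ℝ)^(2*α+1)*α^2*Gamma α)*hG
      + (-(α+1/2)*α^2*Gamma α*Gamma (2*α)*Real.sqrt π)*hpow4
  rw [← mul_div_assoc, ← mul_div_assoc,
    div_eq_div_iff hΓh.ne' (by positivity : ((2*α+1) * Gamma (2*α+1)) ≠ 0)]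
  linear_combination key

lemma base1_scalar (α : ℝ) (hα : 0 < α) :
    α * ((α+1)^2 * (Real.sqrt π * Gamma α / Gamma (α+1/2)
        - Real.sqrt π * Gamma (α+1) / Gamma (α+1+1/2)))
      = (1+α+1/2) * jacobiH α 1 := by
  unfold jacobiH
  have e0 : Gamma (α+1) = α*Gamma α := Real.Gamma_add_one hα.ne'
  have e1 : Gamma (2*α+1) = 2*α*Gamma (2*α) := Real.Gamma_add_one (by positivity)
  have hΓα : (0:ℝ) < Gamma α := Real.Gamma_pos_of_pos hα
  have hΓh : (0:ℝ) < Gamma (α+1/2) := Real.Gamma_pos_of_pos (by positivity)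
  have hΓ2 : (0:ℝ) < Gamma (2*α) := Real.Gamma_pos_of_pos (by positivity)
  have hG := Real.Gamma_mul_Gamma_add_half α
  have hpow4 : (2:ℝ)^(2*α+1)*(2:ℝ)^(1-2*α) = 4 := by
    rw [← Real.rpow_add two_pos, show 2*α+1+(1-2*α) = (2:ℝ) by ring, two_rpow_two]
  have eh : Gamma (α+1+1/2) = (α+1/2)*Gamma (α+1/2) := by
    rw [show α+1+1/2 = (α+1/2)+1 by ring, Real.Gamma_add_one (by positivity)]
  have e2 : Gamma (α+1+1) = (α+1)*Gamma (α+1) := Real.Gamma_add_one (by positivity)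
  have e3 : Gamma (1+2*α+1) = (2*α+1)*(2*α*Gamma (2*α)) := by
    rw [show (1:ℝ)+2*α+1 = (2*α+1)+1 by ring, Real.Gamma_add_one (by positivity), e1]
  push_cast
  norm_num
  rw [show (1:ℝ)+α+1 = α+1+1 by ring, e2, eh, e3, e0]
  have hsum : Real.sqrt π * Gamma α / Gamma (α+1/2)
      - Real.sqrt π * (α*Gamma α) / ((α+1/2)*Gamma (α+1/2))
      = Real.sqrt π * Gamma α / (2*(α+1/2)*Gamma (α+1/2)) := by
    rw [div_sub_div _ _ hΓh.ne' (by positivity), div_eq_div_iff (by positivity) (by positivity)]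
    ring
  rw [hsum, ← mul_div_assoc, ← mul_div_assoc, ← mul_div_assoc,
    div_eq_div_iff (by positivity) (by positivity :
      ((2+2*α+1)*((2*α+1)*(2*α*Gamma (2*α)))) ≠ 0)]
  linear_combination (-(1+α+1/2)*(2:ℝ)^(2*α+1)*(α+1)^2*α^2*Gamma α*2*(α+1/2))*hG
    + (-(1+α+1/2)*(α+1)^2*α^2*Gamma α*2*(α+1/2)*Gamma (2*α)*Real.sqrt π)*hpow4

lemma integral_congr_interior {f g : ℝ → ℝ} (h : ∀ x ∈ Set.Ioo (-1:ℝ) 1, f x = g x) :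
    ∫ x in (-1:ℝ)..1, f x = ∫ x in (-1:ℝ)..1, g x := by
  apply intervalIntegral.integral_congr_ae
  rw [MeasureTheory.ae_iff]
  refine MeasureTheory.measure_mono_null ?_ (MeasureTheory.measure_singleton (1:ℝ))
  intro x hx
  simp only [Set.mem_setOf_eq] at hx
  push_neg at hx
  obtain ⟨hx1, hx2⟩ := hx
  rw [Set.uIoc_of_le (by norm_num : (-1:ℝ) ≤ 1)] at hx1
  by_contra hne
  simp only [Set.mem_singleton_iff] at hne
  exact hx2 (h x ⟨hx1.1, lt_of_le_of_ne hx1.2 hne⟩)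

/-- The full statement, unnormalized. -/
def TS (n : ℕ) : Prop := ∀ α : ℝ, 0 < α →
    α * ∫ x in (-1:ℝ)..1, (jacobiP α n x)^2 * (1-x^2)^(α-1)
      = ((n:ℝ)+α+1/2) * jacobiH α n

lemma Tall : ∀ n : ℕ, TS n := by
  have key : ∀ n : ℕ, TS n ∧ TS (n+1) := by
    intro n
    induction n with
    | zero =>
      constructor
      · intro α hα
        have hint : (∫ x in (-1:ℝ)..1, (jacobiP α 0 x)^2*(1-x^2)^(α-1))
            = ∫ x in (-1:ℝ)..1, (1-x^2)^(α-1) := by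
          apply intervalIntegral.integral_congr
          intro x hx
          simp only [jacobiP_zero]
          ring
        rw [hint, integral_w hα]
        push_cast
        linear_combination base0_scalar α hα
      · show TS 1
        intro α hα
        have hα1 : (0:ℝ) < α+1 := by linarith
        have h1 : (∫ x in (-1:ℝ)..1, (jacobiP α 1 x)^2*(1-x^2)^(α-1))
            = (α+1)^2 * ∫ x in (-1:ℝ)..1, x^2*(1-x^2)^(α-1) := by
          rw [← intervalIntegral.integral_const_mul]
          apply intervalIntegral.integral_congr
          intro x hx
          simp only [jacobiP_one]
          ring
        rw [h1]
        have hsplit : (∫ x in (-1:ℝ)..1, x^2*(1-x^2)^(α-1))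
            = (∫ x in (-1:ℝ)..1, (1-x^2)^(α-1)) - ∫ x in (-1:ℝ)..1, (1-x^2)^(α+1-1) := by
          rw [← intervalIntegral.integral_sub (ii_w hα) (ii_w hα1)]
          apply integral_congr_interior
          intro x hx
          have hs : (1:ℝ)-x^2 ≠ 0 := by nlinarith [hx.1, hx.2]
          have h4 : (1-x^2:ℝ)^(α+1-1) = (1-x^2)^(α-1)*(1-x^2) := by
            rw [show α+1-1 = α-1+1 by ring, Real.rpow_add_one hs]
          rw [h4]
          ring
        rw [hsplit, integral_w hα, integral_w hα1]
        push_cast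
        linear_combination base1_scalar α hα
    | succ k ih =>
      refine ⟨ih.2, ?_⟩
      intro α hα
      have hα1 : (0:ℝ) < α+1 := by linarith
      have IH := ih.2 (α+1) hα1
      rw [show α+1-1 = α by ring] at IH
      have hk := key_int α hα k
      have hr := jacobiH_ratio α hα k
      rw [show k+2 = k+1+1 from rfl] at hr
      push_cast at IH ⊢
      have h4 : (4*((k:ℝ)+2)) ≠ 0 := by positivity
      apply mul_left_cancel₀ h4
      linear_combination hk + ((k:ℝ)+2*α+3)*IH - ((k:ℝ)+2+α+1/2)*hr
  exact fun n => (key n).1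

/-- The normalized Jacobi polynomial `P̃_n^{(α,α)}`, with unit norm in
`L²([-1,1], (1-x²)^α dx)`. -/
noncomputable def normJacobiP (α : ℝ) (n : ℕ) (x : ℝ) : ℝ :=
  jacobiP α n x / Real.sqrt (jacobiH α n)


theorem weighted_norm_normJacobiP (α : ℝ) (hα : 0 < α) (n : ℕ) :
    α * ∫ x in (-1 : ℝ)..1, (normJacobiP α n x) ^ 2 * (1 - x ^ 2) ^ (α - 1) =
      (n : ℝ) + α + 1 / 2 := by
  have hT := Tall n α hα
  have hpos := jacobiH_pos α hα n
  have hint : (∫ x in (-1:ℝ)..1, (normJacobiP α n x)^2 * (1-x^2)^(α-1))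
      = (∫ x in (-1:ℝ)..1, (jacobiP α n x)^2 * (1-x^2)^(α-1)) / jacobiH α n := by
    rw [← intervalIntegral.integral_div]
    apply intervalIntegral.integral_congr
    intro x hx
    unfold normJacobiP
    simp only [div_pow, Real.sq_sqrt hpos.le]
    ring
  rw [hint, mul_div_assoc', div_eq_iff hpos.ne']
  linear_combination hT
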